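/- arXiv:1806.07881 — 3 statements merged into one kernel-verified Lean document; each statement's English description precedes it below -/
import Mathlib

section
/- Let l ≥ 1 be an integer and define γ_l : (0,∞) → ℝ by γ_l(ρ) = 0 for ρ ≥ 1/l, γ_l(ρ) = l^{l+1}/(l+1)^{l-1} for ρ ∈ [1/(l+1), 1/l), and γ_l(ρ) = l(1-ρ)^{l-1} for ρ ∈ (0, 1/(l+1)). Then ∫_0^∞ γ_l(ρ) dρ = 1. -/
/-- The scale profile `γ_l` of the polynomial spherical wavelet family. -/
noncomputable def gammaScale (l : ℕ) (ρ : ℝ) : ℝ :=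
  if l = 0 then Set.indicator (Set.Icc (1:ℝ) 2) (fun _ => 1) ρ
  else if 1/(l:ℝ) ≤ ρ then 0
  else if 1/((l:ℝ)+1) ≤ ρ then (l:ℝ)^(l+1)/((l:ℝ)+1)^(l-1)
  else (l:ℝ)*(1-ρ)^(l-1)

open MeasureTheory Set intervalIntegral

/-- For an integer `l ≥ 1`, `∫_0^∞ γ_l(ρ) dρ = 1`. -/
theorem stmt1 (l : ℕ) (hl : 1 ≤ l) :
    ∫ ρ in Set.Ioi (0:ℝ), gammaScale l ρ = 1 := by
  obtain ⟨m, rfl⟩ : ∃ m, l = m + 1 := ⟨l - 1, (Nat.succ_pred_eq_of_pos hl).symm⟩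
  obtain ⟨L, hLdef⟩ : ∃ L : ℝ, L = (m : ℝ) + 1 := ⟨_, rfl⟩
  have hL : 0 < L := by rw [hLdef]; positivity
  have hL1 : 0 < L + 1 := by positivity
  obtain ⟨a, ha⟩ : ∃ a : ℝ, a = 1 / (L + 1) := ⟨_, rfl⟩
  obtain ⟨b, hb⟩ : ∃ b : ℝ, b = 1 / L := ⟨_, rfl⟩
  have ha0 : 0 < a := by rw [ha]; positivity
  have hab : a < b := by
    rw [ha, hb]
    exact one_div_lt_one_div_of_lt hL (by linarith)
  obtain ⟨c, hc⟩ : ∃ c : ℝ, c = L ^ (m + 2) / (L + 1) ^ m := ⟨_, rfl⟩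
  have hcast : ((m + 1 : ℕ) : ℝ) = L := by push_cast [hLdef]; ring
  have hval : ∀ ρ : ℝ, gammaScale (m+1) ρ =
      if b ≤ ρ then 0 else if a ≤ ρ then c else L * (1 - ρ) ^ m := by
    intro ρ
    simp only [gammaScale, Nat.succ_ne_zero, if_false, hcast, Nat.add_sub_cancel]
    rw [← ha, ← hb, show m + 1 + 1 = m + 2 from rfl, ← hc]
  have cont : Continuous (fun x : ℝ => L * (1 - x) ^ m) :=
    continuous_const.mul ((continuous_const.sub continuous_id).pow m)
  have int1 : IntegrableOn (gammaScale (m+1)) (Ioc 0 a) := by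
    rw [integrableOn_Ioc_iff_integrableOn_Ioo]
    apply ((((intervalIntegrable_iff_integrableOn_Ioc_of_le ha0.le).1
      (cont.intervalIntegrable 0 a)).mono_set Ioo_subset_Ioc_self)).congr_fun
      ?_ measurableSet_Ioo
    intro x hx
    rw [hval x, if_neg (by push_neg; exact hx.2.trans hab),
      if_neg (by push_neg; exact hx.2)]
  have int2 : IntegrableOn (gammaScale (m+1)) (Ioc a b) := by
    rw [integrableOn_Ioc_iff_integrableOn_Ioo]
    apply (integrableOn_const (C := c) (hs := measure_Ioo_lt_top.ne)).congr_fun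
      ?_ measurableSet_Ioo
    intro x hx
    rw [hval x, if_neg (by push_neg; exact hx.2), if_pos hx.1.le]
  have int3 : IntegrableOn (gammaScale (m+1)) (Ioi b) := by
    apply (integrableOn_zero).congr_fun ?_ measurableSet_Ioi
    intro x hx
    rw [hval x, if_pos (le_of_lt hx)]
  have hsplit : ∫ ρ in Ioi (0:ℝ), gammaScale (m+1) ρ =
      (∫ ρ in Ioc 0 a, gammaScale (m+1) ρ) + (∫ ρ in Ioc a b, gammaScale (m+1) ρ)
        + ∫ ρ in Ioi b, gammaScale (m+1) ρ := by
    rw [← setIntegral_union (Ioc_disjoint_Ioc.2 (inf_le_left.trans le_sup_right)) measurableSet_Ioc int1 int2,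
      Ioc_union_Ioc_eq_Ioc ha0.le hab.le,
      ← setIntegral_union (Ioc_disjoint_Ioi le_rfl) measurableSet_Ioi
        ((Ioc_union_Ioc_eq_Ioc ha0.le hab.le ▸ int1.union int2)) int3,
      Ioc_union_Ioi_eq_Ioi (ha0.trans hab).le]
  have I3 : ∫ ρ in Ioi b, gammaScale (m+1) ρ = 0 := by
    apply setIntegral_eq_zero_of_forall_eq_zero
    intro x hx
    rw [hval x, if_pos (le_of_lt hx)]
  have I2 : ∫ ρ in Ioc a b, gammaScale (m+1) ρ = (b - a) * c := by
    rw [integral_Ioc_eq_integral_Ioo,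
      setIntegral_congr_fun measurableSet_Ioo (g := fun _ => c) ?_, setIntegral_const,
      measureReal_def, Real.volume_Ioo, ENNReal.toReal_ofReal (by linarith), smul_eq_mul]
    intro x hx
    rw [hval x, if_neg (by push_neg; exact hx.2), if_pos hx.1.le]
  have I1 : ∫ ρ in Ioc 0 a, gammaScale (m+1) ρ = 1 - (1 - a) ^ (m + 1) := by
    rw [integral_Ioc_eq_integral_Ioo,
      setIntegral_congr_fun measurableSet_Ioo (g := fun x => L * (1 - x) ^ m) ?_]
    · rw [← integral_Ioc_eq_integral_Ioo, ← intervalIntegral.integral_of_le ha0.le,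
        intervalIntegral.integral_const_mul]
      have hsub := intervalIntegral.integral_comp_sub_left (a := 0) (b := a)
        (fun x : ℝ => x ^ m) 1
      rw [hsub, integral_pow]
      have hm1 : ((m : ℝ) + 1) = L := hLdef.symm
      rw [hm1]
      field_simp
      simp
    · intro x hx
      rw [hval x, if_neg (by push_neg; exact hx.2.trans hab),
        if_neg (by push_neg; exact hx.2)]
  rw [hsplit, I1, I2, I3]
  have h1a : 1 - a = L / (L + 1) := by rw [ha]; field_simp; ring
  have hba : b - a = 1 / (L * (L + 1)) := by rw [ha, hb]; field_simp; ring
  rw [h1a, hba, hc, div_pow,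
    show L ^ (m+2) = L ^ (m+1) * (L * 1) by ring,
    show (L+1) ^ (m+1) = (L+1) ^ m * (L+1) by ring]
  field_simp
  ring
end

section
/- With γ_l as defined (l ≥ 1), for every R ∈ [0, 1/(l+1)] one has ∫_R^∞ γ_l(ρ) dρ = (1-R)^l, for every R ≥ 1/l one has ∫_R^∞ γ_l(ρ) dρ = 0, and for R ∈ [1/(l+1), 1/l] the value ∫_R^∞ γ_l(ρ) dρ lies in the interval [0, (1-R)^l]. -/
open MeasureTheory Set

lemma gamma_val_zero (l : ℕ) (hl0 : l ≠ 0) (ρ : ℝ) (h : 1/(l:ℝ) ≤ ρ) :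
    gammaScale l ρ = 0 := by
  unfold gammaScale; rw [if_neg hl0, if_pos h]

lemma gamma_val_const (l : ℕ) (hl0 : l ≠ 0) (ρ : ℝ) (h1 : ¬ (1/(l:ℝ) ≤ ρ))
    (h2 : 1/((l:ℝ)+1) ≤ ρ) :
    gammaScale l ρ = (l:ℝ)^(l+1)/((l:ℝ)+1)^(l-1) := by
  unfold gammaScale; rw [if_neg hl0, if_neg h1, if_pos h2]

lemma gamma_val_poly (l : ℕ) (hl0 : l ≠ 0) (ρ : ℝ) (h1 : ¬ (1/(l:ℝ) ≤ ρ))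
    (h2 : ¬ (1/((l:ℝ)+1) ≤ ρ)) :
    gammaScale l ρ = (l:ℝ)*(1-ρ)^(l-1) := by
  unfold gammaScale; rw [if_neg hl0, if_neg h1, if_neg h2]

/-- Reduce the tail integral to the integral over `Ioo R (1/l)`. -/
lemma gamma_tail (l : ℕ) (hl : 1 ≤ l) (R : ℝ) :
    ∫ ρ in Set.Ioi R, gammaScale l ρ = ∫ ρ in Set.Ioo R (1/(l:ℝ)), gammaScale l ρ := by
  have hl0 : l ≠ 0 := Nat.one_le_iff_ne_zero.mp hl
  have h1 : ∫ ρ in Set.Ioi R, gammaScale l ρ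
      = ∫ ρ in Set.Ioi R, (Set.Ioo R (1/(l:ℝ))).indicator (gammaScale l) ρ := by
    apply setIntegral_congr_fun measurableSet_Ioi
    intro ρ hρ
    by_cases h : ρ ∈ Set.Ioo R (1/(l:ℝ))
    · rw [Set.indicator_of_mem h]
    · rw [Set.indicator_of_notMem h]
      have hb : 1/(l:ℝ) ≤ ρ := by
        rcases lt_or_ge ρ (1/(l:ℝ)) with h' | h'
        · exact absurd ⟨hρ, h'⟩ h
        · exact h'
      exact gamma_val_zero l hl0 ρ hb
  rw [h1, setIntegral_indicator measurableSet_Ioo,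
    Set.inter_eq_right.mpr (Set.Ioo_subset_Ioi_self)]

/-- The key exact identity for the constant piece. -/
lemma gamma_key (l : ℕ) (hl : 1 ≤ l) :
    (l:ℝ)^(l+1)/((l:ℝ)+1)^(l-1) * (1/(l:ℝ) - 1/((l:ℝ)+1))
      = (1 - 1/((l:ℝ)+1))^l := by
  obtain ⟨m, rfl⟩ := Nat.exists_eq_add_of_le hl
  have e1 : 1 + m + 1 = m + 2 := by omega
  have e2 : 1 + m - 1 = m := by omega
  have hx : ((1+m:ℕ):ℝ) = (m:ℝ)+1 := by push_cast; ring
  rw [e1, e2, hx]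
  have hm1 : (0:ℝ) < (m:ℝ)+1 := by positivity
  have hm2 : (0:ℝ) < (m:ℝ)+1+1 := by positivity
  have h1a : (1:ℝ) - 1/((m:ℝ)+1+1) = ((m:ℝ)+1)/((m:ℝ)+2) := by
    rw [one_sub_div (by positivity)]; norm_num; ring_nf
  rw [h1a, div_pow]
  rw [div_mul_eq_mul_div, div_eq_div_iff (by positivity) (by positivity)]
  have h5 : (1:ℝ)/((m:ℝ)+1) - 1/((m:ℝ)+1+1) = 1/(((m:ℝ)+1)*((m:ℝ)+2)) := by
    rw [div_sub_div _ _ (by positivity) (by positivity)]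
    norm_num
    exact Or.inl (by ring)
  rw [h5]
  field_simp
  ring

/-- The upper-bound inequality for the constant piece on `[a,b]`. -/
lemma gamma_upper (l : ℕ) (hl : 1 ≤ l) (R : ℝ) (hR1 : 1/((l:ℝ)+1) ≤ R)
    (hR2 : R ≤ 1/(l:ℝ)) :
    (l:ℝ)^(l+1)/((l:ℝ)+1)^(l-1) * (1/(l:ℝ) - R) ≤ (1-R)^l := by
  have hlR : (1:ℝ) ≤ (l:ℝ) := by exact_mod_cast hl
  have hlpos : (0:ℝ) < (l:ℝ) := by linarith
  have hl1pos : (0:ℝ) < (l:ℝ) + 1 := by linarith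
  set t : ℝ := 1 - R with ht_def
  set t0 : ℝ := (l:ℝ)/((l:ℝ)+1) with ht0_def
  have ht0_pos : 0 < t0 := by rw [ht0_def]; positivity
  have htt0 : t ≤ t0 := by
    simp only [ht_def, ht0_def]
    have h1a : (1:ℝ) - 1/((l:ℝ)+1) = (l:ℝ)/((l:ℝ)+1) := by field_simp; ring
    linarith
  have ht_nonneg : 0 ≤ t := by
    have hb1 : 1/(l:ℝ) ≤ 1 := by
      rw [div_le_one hlpos]; linarith
    simp only [ht_def]; linarith
  have htt0' : t * ((l:ℝ)+1) ≤ (l:ℝ) := by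
    have := (le_div_iff₀ hl1pos).mp htt0
    linarith
  have hp : (0:ℝ) ≤ t0^(l-1) := by positivity
  have ht0l : t0^l = t0 * t0^(l-1) := by
    conv_lhs => rw [show l = 1 + (l-1) by omega]
    rw [pow_add, pow_one]
  -- c = l^2 * t0^(l-1)
  have hc_eq : (l:ℝ)^(l+1)/((l:ℝ)+1)^(l-1) = (l:ℝ)^2 * t0^(l-1) := by
    simp only [ht0_def, div_pow]
    have e3 : (l:ℝ)^(l+1) = (l:ℝ)^2 * (l:ℝ)^(l-1) := by
      rw [← pow_add]
      congr 1
      omega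
    rw [e3]
    field_simp
  have hbR : 1/(l:ℝ) - R = t - ((l:ℝ)-1)/(l:ℝ) := by
    simp only [ht_def]; field_simp; ring
  -- step 1 : secant line below tangent line
  have hstep1 : (l:ℝ)^(l+1)/((l:ℝ)+1)^(l-1) * (1/(l:ℝ) - R)
      ≤ t0^l + (l:ℝ) * t0^(l-1) * (t - t0) := by
    rw [hc_eq, hbR, ht0l]
    have key : (l:ℝ)^2 * (t - ((l:ℝ)-1)/(l:ℝ)) ≤ t0 + (l:ℝ) * (t - t0) := by
      simp only [ht0_def]
      have e1 : (l:ℝ)^2*(t - ((l:ℝ)-1)/(l:ℝ)) = (l:ℝ)^2*t - (l:ℝ)*((l:ℝ)-1) := by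
        field_simp
      have e2 : (l:ℝ)/((l:ℝ)+1) + (l:ℝ)*(t - (l:ℝ)/((l:ℝ)+1))
          = ((l:ℝ) + (l:ℝ)*t*((l:ℝ)+1) - (l:ℝ)^2)/((l:ℝ)+1) := by
        field_simp; ring
      rw [e1, e2, le_div_iff₀ hl1pos]
      nlinarith [mul_nonneg (mul_nonneg hlpos.le (sub_nonneg.2 hlR))
        (sub_nonneg.2 htt0')]
    calc (l:ℝ)^2 * t0^(l-1) * (t - ((l:ℝ)-1)/(l:ℝ))
        = t0^(l-1) * ((l:ℝ)^2 * (t - ((l:ℝ)-1)/(l:ℝ))) := by ring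
      _ ≤ t0^(l-1) * (t0 + (l:ℝ) * (t - t0)) := mul_le_mul_of_nonneg_left key hp
      _ = t0 * t0^(l-1) + (l:ℝ) * t0^(l-1) * (t - t0) := by ring
  -- step 2 : tangent line below the convex function (Bernoulli)
  have hstep2 : t0^l + (l:ℝ) * t0^(l-1) * (t - t0) ≤ t^l := by
    have hx : -2 ≤ t/t0 - 1 := by
      have : 0 ≤ t/t0 := by positivity
      linarith
    have hber := one_add_mul_le_pow hx l
    have h1x : 1 + (t/t0 - 1) = t/t0 := by ring
    rw [h1x] at hber
    have hm := mul_le_mul_of_nonneg_left hber (le_of_lt (pow_pos ht0_pos l))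
    calc t0^l + (l:ℝ) * t0^(l-1) * (t - t0)
        = t0^l * (1 + (l:ℝ) * (t/t0 - 1)) := by
          rw [ht0l]
          field_simp
      _ ≤ t0^l * (t/t0)^l := hm
      _ = t^l := by
          have ht0ne : t0 ≠ 0 := ne_of_gt ht0_pos
          rw [mul_comm, div_pow, div_mul_cancel₀ _ (pow_ne_zero l ht0ne)]
  calc (l:ℝ)^(l+1)/((l:ℝ)+1)^(l-1) * (1/(l:ℝ) - R)
      ≤ t0^l + (l:ℝ) * t0^(l-1) * (t - t0) := hstep1
    _ ≤ t^l := hstep2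
    _ = (1-R)^l := by rw [ht_def]

/-- tail integrals of `γ_l`. -/
theorem stmt2 (l : ℕ) (hl : 1 ≤ l) :
    (∀ R ∈ Set.Icc (0:ℝ) (1/((l:ℝ)+1)),
      ∫ ρ in Set.Ioi R, gammaScale l ρ = (1-R)^l) ∧
    (∀ R : ℝ, 1/(l:ℝ) ≤ R → ∫ ρ in Set.Ioi R, gammaScale l ρ = 0) ∧
    (∀ R ∈ Set.Icc (1/((l:ℝ)+1)) (1/(l:ℝ)),
      (∫ ρ in Set.Ioi R, gammaScale l ρ) ∈ Set.Icc (0:ℝ) ((1-R)^l)) := by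
  have hl0 : l ≠ 0 := Nat.one_le_iff_ne_zero.mp hl
  have hlR : (1:ℝ) ≤ (l:ℝ) := by exact_mod_cast hl
  have hlpos : (0:ℝ) < (l:ℝ) := by linarith
  have hl1pos : (0:ℝ) < (l:ℝ) + 1 := by linarith
  have hab : 1/((l:ℝ)+1) < 1/(l:ℝ) := by
    apply one_div_lt_one_div_of_lt hlpos; linarith
  have hc_nonneg : 0 ≤ (l:ℝ)^(l+1)/((l:ℝ)+1)^(l-1) := by positivity
  have hval3 : ∀ ρ : ℝ, ρ < 1/((l:ℝ)+1) → gammaScale l ρ = (l:ℝ)*(1-ρ)^(l-1) := by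
    intro ρ hρ
    exact gamma_val_poly l hl0 ρ (by push_neg; linarith) (by push_neg; exact hρ)
  have hval2 : ∀ ρ : ℝ, 1/((l:ℝ)+1) ≤ ρ → ρ < 1/(l:ℝ) →
      gammaScale l ρ = (l:ℝ)^(l+1)/((l:ℝ)+1)^(l-1) := by
    intro ρ h2 h1
    exact gamma_val_const l hl0 ρ (by push_neg; exact h1) h2
  -- integral of the polynomial piece
  have hpoly : ∀ R : ℝ, R ≤ 1/((l:ℝ)+1) →
      ∫ ρ in Set.Ioc R (1/((l:ℝ)+1)), gammaScale l ρ
        = (1-R)^l - (1-1/((l:ℝ)+1))^l := by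
    intro R hRa
    rw [integral_Ioc_eq_integral_Ioo]
    rw [setIntegral_congr_fun measurableSet_Ioo (fun ρ hρ => hval3 ρ hρ.2)]
    rw [← integral_Ioc_eq_integral_Ioo, ← intervalIntegral.integral_of_le hRa]
    have hderiv : ∀ x ∈ Set.uIcc R (1/((l:ℝ)+1)),
        HasDerivAt (fun ρ : ℝ => -(1-ρ)^l) ((l:ℝ)*(1-x)^(l-1)) x := by
      intro x _
      have h1 : HasDerivAt (fun ρ : ℝ => (1:ℝ) - ρ) (-1) x := by
        simpa using (hasDerivAt_id x).const_sub 1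
      have h2 : HasDerivAt (fun ρ : ℝ => -(1-ρ)^l) _ x := (h1.pow l).neg
      convert h2 using 1
      push_cast
      ring
    rw [intervalIntegral.integral_eq_sub_of_hasDerivAt hderiv]
    · ring
    · apply Continuous.intervalIntegrable
      continuity
  -- integral of the constant piece
  have hconst : ∀ R : ℝ, 1/((l:ℝ)+1) ≤ R → R ≤ 1/(l:ℝ) →
      ∫ ρ in Set.Ioo R (1/(l:ℝ)), gammaScale l ρ
        = (l:ℝ)^(l+1)/((l:ℝ)+1)^(l-1) * (1/(l:ℝ) - R) := by
    intro R h1 h2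
    rw [setIntegral_congr_fun measurableSet_Ioo
      (fun ρ hρ => hval2 ρ (le_trans h1 (le_of_lt hρ.1)) hρ.2)]
    rw [setIntegral_const, Real.volume_real_Ioo_of_le (by linarith)]
    rw [smul_eq_mul]; ring
  refine ⟨?_, ?_, ?_⟩
  · -- part 1
    intro R hR
    rw [gamma_tail l hl R]
    have hRa : R ≤ 1/((l:ℝ)+1) := hR.2
    rw [← Set.Ioc_union_Ioo_eq_Ioo hRa hab]
    rw [setIntegral_union (by
        rw [Set.disjoint_left]; rintro x ⟨_, h1⟩ ⟨h2, _⟩; exact absurd h1 (not_le.2 h2))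
      measurableSet_Ioo ?_ ?_]
    · rw [hpoly R hRa, hconst (1/((l:ℝ)+1)) le_rfl (le_of_lt hab), gamma_key l hl]
      ring
    · rw [integrableOn_Ioc_iff_integrableOn_Ioo]
      apply MeasureTheory.IntegrableOn.congr_fun
        (f := fun ρ : ℝ => (l:ℝ)*(1-ρ)^(l-1)) _ _ measurableSet_Ioo
      · exact (Continuous.integrableOn_Ioc (by continuity)).mono_set
          Set.Ioo_subset_Ioc_self
      · exact fun ρ hρ => (hval3 ρ hρ.2).symm
    · apply MeasureTheory.IntegrableOn.congr_fun
        (f := fun _ : ℝ => (l:ℝ)^(l+1)/((l:ℝ)+1)^(l-1)) _ _ measurableSet_Ioo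
      · exact integrableOn_const
          ((by rw [Real.volume_Ioo]; exact ENNReal.ofReal_ne_top))
      · exact fun ρ hρ => (hval2 ρ (le_of_lt hρ.1) hρ.2).symm
  · -- part 2
    intro R hR
    rw [setIntegral_congr_fun measurableSet_Ioi (g := fun _ => (0:ℝ))
      (fun ρ hρ => gamma_val_zero l hl0 ρ (le_trans hR (le_of_lt hρ)))]
    simp
  · -- part 3
    intro R hR
    rw [gamma_tail l hl R, hconst R hR.1 hR.2]
    constructor
    · have : 0 ≤ 1/(l:ℝ) - R := by linarith [hR.2]
      positivity
    · exact gamma_upper l hl R hR.1 hR.2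
end

section
/- With the wavelet family Ψ_ρ defined by a_l^0(Ψ_ρ) = sqrt(ρ · N(n,l) · γ_l(ρ)) and a_l^k(Ψ_ρ) = 0 for k ≠ 0, and weight α(ρ) = 1/ρ, the admissibility condition holds: for every l ∈ ℕ₀, Σ_{k∈M_{n-1}(l)} ∫_0^∞ |a_l^k(Ψ_ρ)|² (1/ρ) dρ = N(n,l). -/
lemma gamma_nonneg (l : ℕ) (ρ : ℝ) (hρ : 0 < ρ) : 0 ≤ gammaScale l ρ := by
  unfold gammaScale
  split_ifs with h1 h2 h3
  · exact Set.indicator_nonneg (fun _ _ => zero_le_one) ρ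
  · exact le_rfl
  · positivity
  · have hl1 : (1:ℝ) ≤ (l:ℝ) := by exact_mod_cast Nat.one_le_iff_ne_zero.mpr h1
    have : ρ < 1 := by
      have := lt_of_not_ge h3
      calc ρ < 1/((l:ℝ)+1) := this
        _ ≤ 1 := by rw [div_le_one (by linarith)]; linarith
    exact mul_nonneg (Nat.cast_nonneg l) (pow_nonneg (by linarith) _)

lemma gamma_integral (l : ℕ) : ∫ ρ in Set.Ioi (0:ℝ), gammaScale l ρ = 1 := by
  rcases Nat.eq_zero_or_pos l with rfl | hl
  · have : Set.EqOn (gammaScale 0)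
        (Set.indicator (Set.Icc (1:ℝ) 2) (fun _ => (1:ℝ))) (Set.Ioi 0) := by
      intro ρ _; simp [gammaScale]
    rw [MeasureTheory.setIntegral_congr_fun measurableSet_Ioi this,
      MeasureTheory.setIntegral_indicator measurableSet_Icc]
    have h2 : Set.Ioi (0:ℝ) ∩ Set.Icc 1 2 = Set.Icc (1:ℝ) 2 := by
      apply Set.inter_eq_right.mpr
      intro x hx; exact lt_of_lt_of_le one_pos hx.1
    rw [h2]
    simp [Real.volume_Icc]
    norm_num
  · obtain ⟨m, rfl⟩ : ∃ m, l = m + 1 := ⟨l - 1, (Nat.succ_pred_eq_of_pos hl).symm⟩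
    set L : ℝ := (m : ℝ) + 1 with hL
    have hLpos : (0:ℝ) < L := by positivity
    have hL1pos : (0:ℝ) < L + 1 := by positivity
    set b : ℝ := 1 / (L + 1) with hb
    set c : ℝ := 1 / L with hc
    have hbc : b ≤ c := by
      rw [hb, hc, div_le_div_iff₀ hL1pos hLpos]; linarith
    have hbpos : 0 < b := by positivity
    set C : ℝ := L ^ (m + 2) / (L + 1) ^ m with hC
    have hcast : ((m + 1 : ℕ) : ℝ) = L := by push_cast [hL]; ring
    have heq : Set.EqOn (gammaScale (m + 1))
        (fun ρ => Set.indicator (Set.Ioo 0 b) (fun ρ => L * (1 - ρ) ^ m) ρ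
          + Set.indicator (Set.Ico b c) (fun _ => C) ρ) (Set.Ioi 0) := by
      intro ρ hρ
      have hρ0 : (0:ℝ) < ρ := hρ
      simp only [gammaScale, Nat.succ_ne_zero, if_false, hcast]
      have hm1 : m + 1 + 1 = m + 2 := rfl
      have hm2 : m + 1 - 1 = m := rfl
      rw [hm1, hm2]
      rw [show (1:ℝ)/L = c from rfl, show (1:ℝ)/(L+1) = b from rfl]
      by_cases h1 : c ≤ ρ
      · rw [if_pos h1]
        have : ρ ∉ Set.Ioo 0 b := fun h => absurd h.2 (not_lt.mpr (hbc.trans h1))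
        have h2 : ρ ∉ Set.Ico b c := fun h => absurd h.2 (not_lt.mpr h1)
        simp only [Set.indicator_of_notMem this, Set.indicator_of_notMem h2, add_zero]
      · rw [if_neg h1]
        by_cases h2 : b ≤ ρ
        · rw [if_pos h2]
          have h3 : ρ ∉ Set.Ioo 0 b := fun h => absurd h.2 (not_lt.mpr h2)
          have h4 : ρ ∈ Set.Ico b c := ⟨h2, lt_of_not_ge h1⟩
          simp only [Set.indicator_of_notMem h3, Set.indicator_of_mem h4, zero_add, hC]
        · rw [if_neg h2]
          have h3 : ρ ∈ Set.Ioo 0 b := ⟨hρ0, lt_of_not_ge h2⟩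
          have h4 : ρ ∉ Set.Ico b c := fun h => absurd h.1 h2
          simp only [Set.indicator_of_mem h3, Set.indicator_of_notMem h4, add_zero]
    rw [MeasureTheory.setIntegral_congr_fun measurableSet_Ioi heq]
    have hint1 : MeasureTheory.Integrable
        (Set.indicator (Set.Ioo 0 b) (fun ρ => L * (1 - ρ) ^ m)) := by
      rw [MeasureTheory.integrable_indicator_iff measurableSet_Ioo]
      exact ((Continuous.integrableOn_Icc (by continuity)).mono_set Set.Ioo_subset_Icc_self)
    have hint2 : MeasureTheory.Integrable
        (Set.indicator (Set.Ico b c) (fun _ : ℝ => C)) := by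
      rw [MeasureTheory.integrable_indicator_iff measurableSet_Ico]
      exact (MeasureTheory.integrableOn_const_iff).mpr (Or.inr (by
        rw [Real.volume_Ico]; exact ENNReal.ofReal_lt_top))
    rw [MeasureTheory.integral_add (hint1.integrableOn) (hint2.integrableOn),
      MeasureTheory.setIntegral_indicator measurableSet_Ioo,
      MeasureTheory.setIntegral_indicator measurableSet_Ico]
    have hs1 : Set.Ioi (0:ℝ) ∩ Set.Ioo 0 b = Set.Ioo 0 b := by
      apply Set.inter_eq_right.mpr; intro x hx; exact hx.1
    have hs2 : Set.Ioi (0:ℝ) ∩ Set.Ico b c = Set.Ico b c := by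
      apply Set.inter_eq_right.mpr; intro x hx; exact lt_of_lt_of_le hbpos hx.1
    rw [hs1, hs2, MeasureTheory.setIntegral_const]
    have hmeas : MeasureTheory.volume.real (Set.Ico b c) = c - b := by
      rw [MeasureTheory.measureReal_def, Real.volume_Ico, ENNReal.toReal_ofReal (by linarith)]
    have hIoo : ∫ ρ in Set.Ioo (0:ℝ) b, L * (1 - ρ) ^ m
        = ∫ ρ in (0:ℝ)..b, L * (1 - ρ) ^ m := by
      rw [intervalIntegral.integral_of_le hbpos.le,
        MeasureTheory.integral_Ioc_eq_integral_Ioo]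
    have hIval : ∫ ρ in (0:ℝ)..b, L * (1 - ρ) ^ m = 1 - (1 - b) ^ (m + 1) := by
      rw [intervalIntegral.integral_const_mul]
      have : (∫ ρ in (0:ℝ)..b, (1 - ρ) ^ m) = ∫ y in (1 - b)..(1 - 0), y ^ m := by
        simpa using intervalIntegral.integral_comp_sub_left (fun y => y ^ m) 1 (a := 0) (b := b)
      rw [this, integral_pow]
      rw [sub_zero]
      have hd : ((m:ℝ) + 1) ≠ 0 := by positivity
      field_simp
      rw [one_pow, hL]
    rw [hIoo, hIval, hmeas]
    have h1b : 1 - b = L / (L + 1) := by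
      rw [hb]; field_simp; ring
    have hcb : c - b = 1 / (L * (L + 1)) := by
      rw [hb, hc]; field_simp; ring
    rw [h1b, hcb, hC, div_pow, smul_eq_mul]
    have hLm : (L:ℝ) ^ (m+1) ≠ 0 := by positivity
    have hL1m : ((L:ℝ)+1) ^ (m+1) ≠ 0 := by positivity
    field_simp
    ring

/-- for the wavelet family with `a_l^0(Ψ_ρ) = sqrt(ρ N(n,l) γ_l(ρ))` and
`a_l^k(Ψ_ρ) = 0` for `k ≠ 0`, and weight `α(ρ) = 1/ρ`, the admissibility condition
`Σ_{k ∈ M_{n-1}(l)} ∫_0^∞ |a_l^k(Ψ_ρ)|² (1/ρ) dρ = N(n,l)` holds for every `l`. -/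
theorem stmt12 (n : ℕ) (hn : 2 ≤ n)
    (N : ℕ → ℝ)
    (hN : ∀ l, N l = ((2*l+n-1 : ℕ) : ℝ) * (Nat.factorial (l+n-2)) /
      ((Nat.factorial l) * (Nat.factorial (n-1))))
    (M : ℕ → Type) [∀ l, Fintype (M l)] (hcard : ∀ l, (Fintype.card (M l) : ℝ) = N l)
    (k0 : ∀ l, M l) (a : ∀ l, M l → ℝ → ℝ)
    (ha0 : ∀ l ρ, a l (k0 l) ρ = Real.sqrt (ρ * N l * gammaScale l ρ))
    (ha : ∀ l k ρ, k ≠ k0 l → a l k ρ = 0) :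
    ∀ l, ∑ k : M l, ∫ ρ in Set.Ioi (0:ℝ), |a l k ρ|^2 * (1/ρ) = N l := by
  intro l
  have hNnn : 0 ≤ N l := by rw [hN l]; positivity
  rw [Fintype.sum_eq_single (k0 l) (fun k hk => by
    have hz : ∀ ρ : ℝ, |a l k ρ|^2 * (1/ρ) = 0 := fun ρ => by
      rw [ha l k ρ hk]; simp
    simp only [hz, MeasureTheory.integral_zero])]
  have heq : Set.EqOn (fun ρ => |a l (k0 l) ρ|^2 * (1/ρ))
      (fun ρ => N l * gammaScale l ρ) (Set.Ioi 0) := by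
    intro ρ hρ
    have hρ0 : (0:ℝ) < ρ := hρ
    simp only [ha0, sq_abs]
    rw [Real.sq_sqrt (mul_nonneg (mul_nonneg hρ0.le hNnn) (gamma_nonneg l ρ hρ0))]
    field_simp
  rw [MeasureTheory.setIntegral_congr_fun measurableSet_Ioi heq,
    MeasureTheory.integral_const_mul, gamma_integral, mul_one]
end
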